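/- Let R, A, B be topological commutative rings and let φ : R → A and ψ : R → B be continuous ring homomorphisms. Let T be a topological commutative ring together with continuous ring homomorphisms f : A → T and g : B → T satisfying f ∘ φ = g ∘ ψ, and suppose (T, f, g) has the following universal property: for every f-adic ring C and all continuous ring homomorphisms f' : A → C, g' : B → C with f' ∘ φ = g' ∘ ψ, there exists a unique continuous ring homomorphism θ : T → C with f' = θ ∘ f and g' = θ ∘ g. Then, regarding A and B as R-algebras via φ and ψ, the canonical ring homomorphism A ⊗_R B → T induced by f and g is bijective. -/

import Mathlib

open Filter Topology

/-- A subset `S` of a topological ring is bounded if for every neighbourhood `U` of `0`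
there is a neighbourhood `V` of `0` with `V · S ⊆ U`. -/
def IsBoundedSubset {A : Type*} [CommRing A] [TopologicalSpace A] (S : Set A) : Prop :=
  ∀ U ∈ 𝓝 (0 : A), ∃ V ∈ 𝓝 (0 : A), ∀ v ∈ V, ∀ s ∈ S, v * s ∈ U

/-- An element of a topological ring is power-bounded if the set of its powers `aⁿ`, `n ≥ 1`,
is bounded. -/
def IsPowerBounded {A : Type*} [CommRing A] [TopologicalSpace A] (a : A) : Prop :=
  IsBoundedSubset {x : A | ∃ n : ℕ, 1 ≤ n ∧ x = a ^ n}

/-- `A°`, the set of power-bounded elements of a topological ring. -/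
def powerBounded (A : Type*) [CommRing A] [TopologicalSpace A] : Set A :=
  {a : A | IsPowerBounded a}

/-- `I₀` is an ideal of definition of the subring `A₀` of the topological ring `A` if it is
finitely generated and its powers form a basis of neighbourhoods of `0` in `A`. -/
def IsIdealOfDefinition {A : Type*} [CommRing A] [TopologicalSpace A]
    (A₀ : Subring A) (I₀ : Ideal A₀) : Prop :=
  I₀.FG ∧ (𝓝 (0 : A)).HasBasis (fun n : ℕ => 1 ≤ n)
    (fun n => ⇑A₀.subtype '' ((I₀ ^ n : Ideal A₀) : Set A₀))

/-- A ring of definition of a topological ring is an open subring admitting an ideal of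
definition. -/
def IsRingOfDefinition {A : Type*} [CommRing A] [TopologicalSpace A] (A₀ : Subring A) : Prop :=
  IsOpen (A₀ : Set A) ∧ ∃ I₀ : Ideal A₀, IsIdealOfDefinition A₀ I₀

/-- A topological commutative ring is f-adic if it admits a ring of definition. -/
def IsFAdic (A : Type*) [CommRing A] [TopologicalSpace A] : Prop :=
  ∃ A₀ : Subring A, IsRingOfDefinition A₀

/-- A subring `S` of `A` is integrally closed in `A` if every element of `A` integral
over `S` lies in `S`. -/
def IsIntegrallyClosedSubring {A : Type*} [CommRing A] (S : Subring A) : Prop :=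
  ∀ x : A, IsIntegral S x → x ∈ S

theorem topRing_top' (C : Type*) [CommRing C] : @IsTopologicalRing C ⊤ _ := by
  letI : TopologicalSpace C := ⊤
  exact { continuous_add := continuous_top, continuous_mul := continuous_top,
          continuous_neg := continuous_top }

theorem fadic_top' (C : Type*) [CommRing C] : @IsFAdic C _ ⊤ := by
  letI : TopologicalSpace C := ⊤
  refine ⟨⊤, ?_, ⊤, ⟨{1}, by simp [Ideal.span_singleton_one]⟩, ?_⟩
  · simp only [Subring.coe_top]; exact isOpen_univ
  · constructor
    · intro U
      rw [_root_.nhds_top]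
      constructor
      · intro hU
        refine ⟨1, le_refl 1, ?_⟩
        simp only [Filter.mem_top] at hU; subst hU; exact Set.subset_univ _
      · rintro ⟨n, -, hsub⟩
        rw [Filter.mem_top]
        ext x
        simp only [Set.mem_univ, iff_true]
        refine hsub ?_
        exact ⟨⟨x, trivial⟩, by simp [Ideal.top_pow], rfl⟩

universe u

theorem statement14 {R A B T : Type u}
    [CommRing R] [TopologicalSpace R] [IsTopologicalRing R]
    [CommRing A] [TopologicalSpace A] [IsTopologicalRing A]
    [CommRing B] [TopologicalSpace B] [IsTopologicalRing B]
    [CommRing T] [TopologicalSpace T] [IsTopologicalRing T]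
    (φ : R →+* A) (hφ : Continuous ⇑φ) (ψ : R →+* B) (hψ : Continuous ⇑ψ)
    (f : A →+* T) (hf : Continuous ⇑f) (g : B →+* T) (hg : Continuous ⇑g)
    (hcomm : f.comp φ = g.comp ψ)
    (huniv : ∀ (C : Type u) [CommRing C] [TopologicalSpace C] [IsTopologicalRing C],
      IsFAdic C → ∀ (f' : A →+* C) (g' : B →+* C), Continuous ⇑f' → Continuous ⇑g' →
        f'.comp φ = g'.comp ψ →
        ∃! θ : T →+* C, Continuous ⇑θ ∧ f' = θ.comp f ∧ g' = θ.comp g) :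
    letI : Algebra R A := φ.toAlgebra
    letI : Algebra R B := ψ.toAlgebra
    letI : Algebra R T := (f.comp φ).toAlgebra
    Function.Bijective
      ⇑(Algebra.TensorProduct.productMap
          ({ toRingHom := f, commutes' := fun r => rfl } : A →ₐ[R] T)
          ({ toRingHom := g,
             commutes' := fun r => (RingHom.congr_fun hcomm r).symm } : B →ₐ[R] T)) := by
  letI : Algebra R A := φ.toAlgebra
  letI : Algebra R B := ψ.toAlgebra
  letI : Algebra R T := (f.comp φ).toAlgebra
  letI : TopologicalSpace (TensorProduct R A B) := ⊤
  letI : IsTopologicalRing (TensorProduct R A B) := topRing_top' _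
  set fA : A →ₐ[R] T := { toRingHom := f, commutes' := fun r => rfl } with hfA
  set gB : B →ₐ[R] T :=
    { toRingHom := g, commutes' := fun r => (RingHom.congr_fun hcomm r).symm } with hgB
  set P := (Algebra.TensorProduct.productMap fA gB).toRingHom with hPdef
  show Function.Bijective ⇑P
  have h1 : ((Algebra.TensorProduct.includeLeft : A →ₐ[R] TensorProduct R A B) :
      A →+* TensorProduct R A B).comp φ =
      ((Algebra.TensorProduct.includeRight : B →ₐ[R] TensorProduct R A B) :
      B →+* TensorProduct R A B).comp ψ := by
    ext r
    show (φ r) ⊗ₜ[R] (1:B) = (1:A) ⊗ₜ[R] (ψ r)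
    have hr : φ r = algebraMap R A r := rfl
    have hr2 : ψ r = algebraMap R B r := rfl
    rw [hr, hr2, Algebra.algebraMap_eq_smul_one, Algebra.algebraMap_eq_smul_one,
      TensorProduct.smul_tmul]
  obtain ⟨θ, ⟨-, hθf, hθg⟩, -⟩ :=
    huniv (TensorProduct R A B) (fadic_top' _)
      ((Algebra.TensorProduct.includeLeft : A →ₐ[R] TensorProduct R A B) : A →+* _)
      ((Algebra.TensorProduct.includeRight : B →ₐ[R] TensorProduct R A B) : B →+* _)
      continuous_top continuous_top h1
  have hθfa : ∀ a : A, θ (f a) = a ⊗ₜ[R] (1:B) := fun a => (RingHom.congr_fun hθf a).symm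
  have hθgb : ∀ b : B, θ (g b) = (1:A) ⊗ₜ[R] b := fun b => (RingHom.congr_fun hθg b).symm
  have hPf : ∀ a : A, P (a ⊗ₜ[R] (1:B)) = f a := by
    intro a; simp [hPdef, Algebra.TensorProduct.productMap_apply_tmul, hfA, hgB]
  have hPg : ∀ b : B, P ((1:A) ⊗ₜ[R] b) = g b := by
    intro b; simp [hPdef, Algebra.TensorProduct.productMap_apply_tmul, hfA, hgB]
  have hleft : ∀ x : TensorProduct R A B, θ (P x) = x := by
    intro x
    induction x using TensorProduct.induction_on with
    | zero => simp
    | tmul a b =>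
        have : P (a ⊗ₜ[R] b) = f a * g b := by
          simp [hPdef, Algebra.TensorProduct.productMap_apply_tmul, hfA, hgB]
        rw [this, map_mul, hθfa, hθgb, Algebra.TensorProduct.tmul_mul_tmul, mul_one, one_mul]
    | add x y hx hy => rw [map_add, map_add, hx, hy]
  -- surjectivity via uniqueness into T with the indiscrete topology
  have hright : ∀ t : T, P (θ t) = t := by
    obtain ⟨θ₁, -, huniq⟩ :=
      @huniv T _ ⊤ (topRing_top' T) (fadic_top' T) f g continuous_top continuous_top hcomm
    have hid : RingHom.id T = θ₁ := by
      apply huniq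
      exact ⟨continuous_top, (RingHom.id_comp f).symm, (RingHom.id_comp g).symm⟩
    have hPθ : P.comp θ = θ₁ := by
      apply huniq
      refine ⟨continuous_top, ?_, ?_⟩
      · ext a
        show f a = P (θ (f a))
        rw [hθfa, hPf]
      · ext b
        show g b = P (θ (g b))
        rw [hθgb, hPg]
    intro t
    have := RingHom.congr_fun (hid.trans hPθ.symm) t
    simpa using this.symm
  exact ⟨Function.LeftInverse.injective hleft, fun t => ⟨θ t, hright t⟩⟩
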